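/- arXiv:1705.00595 — 2 statements merged into one kernel-verified Lean document; each statement's English description precedes it below -/
import Mathlib

section
/- Let D be an analysis instance and ⋈ a weak independence on its transformers. If σ and σ' are two sequences of transformers that are interleavings of the same configuration of the unfolding of D under ⋈ (i.e., both are topological sortings of the same finite labelled partial order in which any two causally unordered events carry ⋈-independent labels), then applying σ and σ' to the initial element d₀ yields the same element: state(σ) = state(σ'). -/
private lemma foldl_comm_aux {ε D : Type*} (h : ε → D → D) (Reach : Set D)
    (hclosed : ∀ d ∈ Reach, ∀ e, h e d ∈ Reach) (e : ε) :
    ∀ (l1 : List ε) (d : D), d ∈ Reach →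
      (∀ f ∈ l1, ∀ d' ∈ Reach, h f (h e d') = h e (h f d')) →
      List.foldl (fun d e => h e d) (h e d) l1
        = h e (List.foldl (fun d e => h e d) d l1) := by
  intro l1
  induction l1 with
  | nil => intro d _ _; rfl
  | cons f t ih =>
    intro d hd hcm
    simp only [List.foldl_cons]
    rw [hcm f (List.mem_cons_self) d hd]
    exact ih (h f d) (hclosed d hd f) (fun g hg => hcm g (List.mem_cons_of_mem _ hg))

private lemma main_aux {ε D : Type*} (lt : ε → ε → Prop)
    (h : ε → D → D) (indep : (D → D) → (D → D) → Prop)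
    (Reach : Set D)
    (hcomm : ∀ f g, indep f g → ∀ d ∈ Reach, f (g d) = g (f d))
    (hlabels : ∀ e e', e ≠ e' → ¬ lt e e' → ¬ lt e' e → indep (h e) (h e'))
    (hclosed : ∀ d ∈ Reach, ∀ e, h e d ∈ Reach) :
    ∀ (l' l : List ε) (d : D), d ∈ Reach → l.Nodup → l.Perm l' →
      l.Pairwise (fun a b => ¬ lt b a) → l'.Pairwise (fun a b => ¬ lt b a) →
      l.foldl (fun d e => h e d) d = l'.foldl (fun d e => h e d) d := by
  intro l'
  induction l' with
  | nil =>
    intro l d _ _ hperm _ _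
    rw [List.perm_nil.mp hperm]
  | cons e t' ih =>
    intro l d hd hnd hperm hp hp'
    have he : e ∈ l := hperm.mem_iff.mpr (List.mem_cons_self)
    obtain ⟨l1, l2, rfl⟩ := List.append_of_mem he
    have hnotmem : e ∉ l1 := by
      have := (List.nodup_append'.mp hnd).2.2
      intro hmem
      exact this hmem (List.mem_cons_self)
    have hpl := List.pairwise_append.mp hp
    have hpt' := (List.pairwise_cons.mp hp')
    have hcm : ∀ f ∈ l1, ∀ d' ∈ Reach, h f (h e d') = h e (h f d') := by
      intro f hf d' hd'
      have hne : f ≠ e := fun hfe => hnotmem (hfe ▸ hf)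
      have h1 : ¬ lt e f := hpl.2.2 f hf e (List.mem_cons_self)
      have h2 : ¬ lt f e := by
        have hft' : f ∈ t' := by
          have : f ∈ e :: t' := hperm.mem_iff.mp (List.mem_append_left _ hf)
          rcases List.mem_cons.mp this with h' | h'
          · exact absurd h' hne
          · exact h'
        exact hpt'.1 f hft'
      exact hcomm _ _ (hlabels f e hne h2 h1) d' hd'
    have key : (l1 ++ e :: l2).foldl (fun d e => h e d) d
        = (l1 ++ l2).foldl (fun d e => h e d) (h e d) := by
      rw [List.foldl_append, List.foldl_append, List.foldl_cons]
      congr 1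
      exact (foldl_comm_aux h Reach hclosed e l1 d hd hcm).symm
    rw [key, List.foldl_cons]
    have hsub : (l1 ++ l2).Sublist (l1 ++ e :: l2) :=
      (List.sublist_cons_self e l2).append_left l1
    have hperm' : (l1 ++ l2).Perm t' := by
      have h1 : (l1 ++ e :: l2).Perm (e :: (l1 ++ l2)) := List.perm_middle
      exact (h1.symm.trans hperm).cons_inv
    exact ih (l1 ++ l2) (h e d) (hclosed d hd e) (hnd.sublist hsub) hperm'
      (hp.sublist hsub) hpt'.2

theorem stmt_6 {ε D : Type*} (lt : ε → ε → Prop) (hstrict : IsStrictOrder ε lt)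
    (h : ε → D → D) (indep : (D → D) → (D → D) → Prop)
    (Reach : Set D) (d0 : D)
    (hsym : Symmetric indep) (hirr : Irreflexive indep)
    (hcomm : ∀ f g, indep f g → ∀ d ∈ Reach, f (g d) = g (f d))
    (hlabels : ∀ e e', e ≠ e' → ¬ lt e e' → ¬ lt e' e → indep (h e) (h e'))
    (hd0 : d0 ∈ Reach)
    (hclosed : ∀ d ∈ Reach, ∀ e, h e d ∈ Reach)
    (l l' : List ε) (hnd : l.Nodup) (hnd' : l'.Nodup)
    (hperm : l.Perm l')
    (hsort : ∀ i j (hi : i < l.length) (hj : j < l.length),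
      lt (l.get ⟨i, hi⟩) (l.get ⟨j, hj⟩) → i < j)
    (hsort' : ∀ i j (hi : i < l'.length) (hj : j < l'.length),
      lt (l'.get ⟨i, hi⟩) (l'.get ⟨j, hj⟩) → i < j) :
    l.foldl (fun d e => h e d) d0 = l'.foldl (fun d e => h e d) d0 := by
  have toPW : ∀ (m : List ε), (∀ i j (hi : i < m.length) (hj : j < m.length),
      lt (m.get ⟨i, hi⟩) (m.get ⟨j, hj⟩) → i < j) →
      m.Pairwise (fun a b => ¬ lt b a) := by
    intro m hm
    rw [List.pairwise_iff_get]
    intro i j hij hlt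
    exact absurd (hm j i j.isLt i.isLt hlt) (Nat.not_lt.mpr (le_of_lt hij))
  exact main_aux lt h indep Reach hcomm hlabels hclosed l' l d0 hd0 hnd hperm
    (toPW l hsort) (toPW l' hsort')
end

section
/- Let D be an analysis instance and ⋈ an independence relation on transformers (a weak independence that additionally satisfies: for all reachable d, if f(d) ≠ ⊥ then f'(f(d)) ≠ ⊥ iff f'(d) ≠ ⊥). Let σ = f₁…fₙ be a sequence of pairwise ⋈-independent transformers each individually enabled at a reachable element d (fᵢ(d) ≠ ⊥ for all i). Then state of applying the whole sequence to d is not ⊥: (fₙ ∘ … ∘ f₁)(d) ≠ ⊥, provided every intermediate element remains reachable. -/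
theorem stmt_7 {D : Type*} [PartialOrder D] [OrderBot D]
    (indep : (D → D) → (D → D) → Prop) (Reach : Set D)
    (hsym : Symmetric indep) (hirr : Irreflexive indep)
    (hcomm : ∀ f g, indep f g → ∀ d ∈ Reach, f (g d) = g (f d))
    (henab : ∀ f g, indep f g → ∀ d ∈ Reach, f d ≠ ⊥ → (g (f d) ≠ ⊥ ↔ g d ≠ ⊥))
    (σ : List (D → D)) (hpw : σ.Pairwise indep)
    (hstrict : ∀ f ∈ σ, f ⊥ = ⊥)
    (d : D) (hd : d ∈ Reach) (hdbot : d ≠ ⊥)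
    (hen : ∀ f ∈ σ, f d ≠ ⊥)
    (hclosed : ∀ x ∈ Reach, ∀ f ∈ σ, f x ≠ ⊥ → f x ∈ Reach) :
    σ.foldl (fun x f => f x) d ≠ ⊥ := by
  induction σ generalizing d with
  | nil => exact hdbot
  | cons f σ' ih =>
    rcases List.pairwise_cons.mp hpw with ⟨hf, hpw'⟩
    have hfd : f d ≠ ⊥ := hen f List.mem_cons_self
    have hfdR : f d ∈ Reach := hclosed d hd f List.mem_cons_self hfd
    exact ih hpw' (fun g hg => hstrict g (List.mem_cons_of_mem _ hg)) (f d) hfdR hfd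
      (fun g hg => (henab f g (hf g hg) d hd hfd).mpr (hen g (List.mem_cons_of_mem _ hg)))
      (fun x hx g hg => hclosed x hx g (List.mem_cons_of_mem _ hg))
end
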